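/- Let p be an odd prime. Then any two vertices of the Platonic graph Π_p are joined by a path of length at most 3; that is, the diameter of Π_p is at most 3. -/

import Mathlib

/-- Pairs `(λ, μ) ∈ (ℤ/N)²` with `gcd(λ, μ, N) = 1`. -/
abbrev PlatonicPair (N : ℕ) : Type :=
  {x : ZMod N × ZMod N // Nat.gcd (Nat.gcd x.1.val x.2.val) N = 1}

/-- Identify `(λ,μ)` with `(-λ,-μ)`. -/
instance platonicSetoid (N : ℕ) : Setoid (PlatonicPair N) where
  r x y := y.val = x.val ∨ y.val = -x.val
  iseqv := by
    refine ⟨fun _ => Or.inl rfl, ?_, ?_⟩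
    · rintro x y (h | h)
      · exact Or.inl h.symm
      · right; rw [h, neg_neg]
    · rintro x y z (h1 | h1) (h2 | h2)
      · exact Or.inl (h2.trans h1)
      · right; rw [h2, h1]
      · right; rw [h2, h1]
      · left; rw [h2, h1, neg_neg]

/-- Vertices of the Platonic graph: classes `[λ,μ] = {(λ,μ), (-λ,-μ)}`. -/
abbrev PlatonicVertex (N : ℕ) : Type := Quotient (platonicSetoid N)

/-- The Platonic graph `Π_N`: distinct classes `[λ,μ]`, `[ν,ω]` are adjacent
iff `λω - μν = ±1` in `ℤ/N`. -/
def Platonic (N : ℕ) : SimpleGraph (PlatonicVertex N) where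
  Adj a b := a ≠ b ∧ ∃ x y : PlatonicPair N, ⟦x⟧ = a ∧ ⟦y⟧ = b ∧
    (x.val.1 * y.val.2 - x.val.2 * y.val.1 = 1 ∨
     x.val.1 * y.val.2 - x.val.2 * y.val.1 = -1)
  symm := by
    constructor
    rintro a b ⟨hne, x, y, hx, hy, hdet⟩
    refine ⟨hne.symm, y, x, hy, hx, ?_⟩
    rcases hdet with h | h
    · right; linear_combination -h
    · left; linear_combination -h
  loopless := ⟨fun a h => h.1 rfl⟩

instance platonicDecRel (N : ℕ) :
    DecidableRel (α := PlatonicPair N) (· ≈ ·) := fun x y =>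
  inferInstanceAs (Decidable (y.val = x.val ∨ y.val = -x.val))

instance (N : ℕ) : DecidableEq (PlatonicVertex N) :=
  @Quotient.decidableEq _ _ (platonicDecRel N)

instance (N : ℕ) [NeZero N] : Fintype (PlatonicVertex N) :=
  Quotient.fintype _

instance platonicAdjDec (N : ℕ) [NeZero N] : DecidableRel (Platonic N).Adj := fun a b =>
  inferInstanceAs (Decidable (a ≠ b ∧ ∃ x y : PlatonicPair N, ⟦x⟧ = a ∧ ⟦y⟧ = b ∧
    (x.val.1 * y.val.2 - x.val.2 * y.val.1 = 1 ∨
     x.val.1 * y.val.2 - x.val.2 * y.val.1 = -1)))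

/-- The class of `(λ,μ)` has nonvanishing second coordinate. -/
def secondNZ (N : ℕ) (v : PlatonicVertex N) : Prop :=
  ∀ x : PlatonicPair N, ⟦x⟧ = v → x.val.2 ≠ 0

instance (N : ℕ) [NeZero N] : DecidablePred (secondNZ N) := fun _ =>
  Fintype.decidableForallFintype

/-- The modified Platonic graph `Π_p'`: induced subgraph of `Π_p` on the classes
`[λ,μ]` with `μ ≠ 0`. -/
def ModPlatonic (N : ℕ) : SimpleGraph {v : PlatonicVertex N | secondNZ N v} :=
  SimpleGraph.induce {v : PlatonicVertex N | secondNZ N v} (Platonic N)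

instance (N : ℕ) [NeZero N] : DecidableRel (ModPlatonic N).Adj := fun a b =>
  inferInstanceAs (Decidable ((Platonic N).Adj a b))

section Aux

variable {p : ℕ} [Fact p.Prime]

private lemma p_gcd_cond {a b : ZMod p} (h : ¬(a = 0 ∧ b = 0)) :
    Nat.gcd (Nat.gcd a.val b.val) p = 1 := by
  have hp := (Fact.out : p.Prime)
  haveI : NeZero p := ⟨hp.ne_zero⟩
  rw [Nat.gcd_comm]
  refine (Nat.Prime.coprime_iff_not_dvd hp).mpr fun hdvd => ?_
  have ha : p ∣ a.val := hdvd.trans (Nat.gcd_dvd_left _ _)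
  have hb : p ∣ b.val := hdvd.trans (Nat.gcd_dvd_right _ _)
  have ha0 : a.val = 0 := Nat.eq_zero_of_dvd_of_lt ha (ZMod.val_lt a)
  have hb0 : b.val = 0 := Nat.eq_zero_of_dvd_of_lt hb (ZMod.val_lt b)
  exact h ⟨(ZMod.val_eq_zero a).mp ha0, (ZMod.val_eq_zero b).mp hb0⟩

private lemma pair_ne_zero (x : PlatonicPair p) : ¬(x.val.1 = 0 ∧ x.val.2 = 0) := by
  have hp := (Fact.out : p.Prime)
  haveI : NeZero p := ⟨hp.ne_zero⟩
  rintro ⟨h1, h2⟩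
  have hx := x.2
  rw [h1, h2] at hx
  simp [ZMod.val_zero] at hx
  exact hp.one_lt.ne' hx

private lemma adj_mk (x y : PlatonicPair p)
    (h : x.val.1 * y.val.2 - x.val.2 * y.val.1 = 1 ∨
         x.val.1 * y.val.2 - x.val.2 * y.val.1 = -1) :
    (Platonic p).Adj ⟦x⟧ ⟦y⟧ := by
  refine ⟨fun hq => ?_, x, y, rfl, rfl, h⟩
  have hr := Quotient.exact hq
  have h0 : (1 : ZMod p) ≠ 0 := one_ne_zero
  rcases hr with he | he <;> rw [he] at h <;>
    (try simp only [Prod.fst_neg, Prod.snd_neg] at h) <;>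
    rcases h with h | h
  · exact h0 (by linear_combination -h)
  · exact h0 (by linear_combination h)
  · exact h0 (by linear_combination -h)
  · exact h0 (by linear_combination h)

private lemma mid (x y : PlatonicPair p)
    (hD : x.val.1 * y.val.2 - x.val.2 * y.val.1 ≠ 0) :
    ∃ u : PlatonicPair p,
      x.val.1 * u.val.2 - x.val.2 * u.val.1 = 1 ∧
      u.val.1 * y.val.2 - u.val.2 * y.val.1 = -1 := by
  obtain ⟨⟨a, b⟩, hx⟩ := x
  obtain ⟨⟨c, d⟩, hy⟩ := y
  simp only at hD ⊢
  have hD' : a * d - b * c ≠ 0 := by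
    intro h; exact hD (by linear_combination h)
  have hinv : (a * d - b * c) * (a * d - b * c)⁻¹ = 1 := mul_inv_cancel₀ hD'
  refine ⟨⟨((c - a) * (a * d - b * c)⁻¹, (d - b) * (a * d - b * c)⁻¹),
    p_gcd_cond ?_⟩, ?_, ?_⟩
  · rintro ⟨h1, h2⟩
    have hi : (a * d - b * c)⁻¹ ≠ 0 := inv_ne_zero hD'
    have hc : c - a = 0 := by
      rcases mul_eq_zero.mp h1 with h | h
      · exact h
      · exact absurd h hi
    have hd : d - b = 0 := by
      rcases mul_eq_zero.mp h2 with h | h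
      · exact h
      · exact absurd h hi
    exact hD' (by linear_combination a * hd - b * hc)
  · linear_combination hinv
  · linear_combination -hinv

private lemma nbr (x : PlatonicPair p) :
    ∃ u : PlatonicPair p, x.val.1 * u.val.2 - x.val.2 * u.val.1 = 1 := by
  by_cases h : x.val.1 = 0
  · have hb : x.val.2 ≠ 0 := fun h2 => pair_ne_zero x ⟨h, h2⟩
    refine ⟨⟨(-(x.val.2)⁻¹, 0), p_gcd_cond (by simp [hb])⟩, ?_⟩
    simp [mul_inv_cancel₀ hb]
  · refine ⟨⟨(0, (x.val.1)⁻¹), p_gcd_cond (by simp [h])⟩, ?_⟩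
    simp [mul_inv_cancel₀ h]

end Aux

/-- Any two vertices of the Platonic graph `Π_p`, for an odd prime `p`, are joined
by a walk of length at most `3`; i.e. the diameter of `Π_p` is at most `3`. -/
theorem platonic_diam_le_three (p : ℕ) (hp : p.Prime) (hodd : Odd p)
    (a b : PlatonicVertex p) :
    ∃ w : (Platonic p).Walk a b, w.length ≤ 3 := by
  haveI : Fact p.Prime := ⟨hp⟩
  obtain ⟨v, rfl⟩ := Quotient.exists_rep a
  obtain ⟨w, rfl⟩ := Quotient.exists_rep b
  by_cases hD : v.val.1 * w.val.2 - v.val.2 * w.val.1 = 0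
  · obtain ⟨u, hu⟩ := nbr v
    have hD2 : u.val.1 * w.val.2 - u.val.2 * w.val.1 ≠ 0 := by
      intro h2
      apply pair_ne_zero w
      constructor
      · linear_combination -(w.val.1) * hu + u.val.1 * hD - v.val.1 * h2
      · linear_combination -(w.val.2) * hu + u.val.2 * hD - v.val.2 * h2
    obtain ⟨u', h1, h2⟩ := mid u w hD2
    exact ⟨.cons (adj_mk v u (Or.inl hu))
      (.cons (adj_mk u u' (Or.inl h1))
      (.cons (adj_mk u' w (Or.inr h2)) .nil)), by simp⟩
  · obtain ⟨u, h1, h2⟩ := mid v w hD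
    exact ⟨.cons (adj_mk v u (Or.inl h1))
      (.cons (adj_mk u w (Or.inr h2)) .nil), by simp⟩
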